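/- Consider the noisy voter model corresponding to continuous-time random walk with parameter 1 on the n-star, with n even. Partition the leaves into disjoint sets A and B each of size n/2, and define Φ(η) = ∑_{x∈A} η(x) − ∑_{x∈B} η(x). Then for all t ≥ 0 and all configurations η: E_η[Φ(η_t)] = e^{−2t}·Φ(η); that is, ∑_{η'} P^t(η,η')·Φ(η') = e^{−2t}·Φ(η). -/

import Mathlib

open scoped BigOperators

/-- The generator of a spin system on `{0,1}^V` given flip rates `r η x`. -/
noncomputable def genOfRate {V : Type} [Fintype V] [DecidableEq V]
    (r : (V → Bool) → V → ℝ) : Matrix (V → Bool) (V → Bool) ℝ :=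
  fun η ξ =>
    (∑ x, if ξ = Function.update η x (!η x) then r η x else 0)
      - (if ξ = η then ∑ x, r η x else 0)

/-- Flip rate of the noisy voter model with voting rates `q`. -/
noncomputable def voterRate {V : Type} [Fintype V] [DecidableEq V]
    (q : V → V → ℝ) (η : V → Bool) (x : V) : ℝ :=
  1 / 2 + ∑ y ∈ Finset.univ.filter (fun y => y ≠ x), q x y * (if η y ≠ η x then 1 else 0)

/-- Generator of the noisy voter model. -/
noncomputable def voterGen {V : Type} [Fintype V] [DecidableEq V]
    (q : V → V → ℝ) : Matrix (V → Bool) (V → Bool) ℝ :=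
  genOfRate (voterRate q)

/-- Transition semigroup `P^t = exp (t Q)` of the noisy voter model. -/
noncomputable def voterP {V : Type} [Fintype V] [DecidableEq V]
    (q : V → V → ℝ) (t : ℝ) : Matrix (V → Bool) (V → Bool) ℝ :=
  NormedSpace.exp (t • voterGen q)

/-- Total variation distance between two vectors on a finite set. -/
noncomputable def tvDist {Ω : Type} [Fintype Ω] (m1 m2 : Ω → ℝ) : ℝ :=
  (1 / 2) * ∑ s, |m1 s - m2 s|

/-- `π` is a stationary distribution for the continuous-time Markov chain `(S, q)`. -/
def IsStationaryChain {V : Type} [Fintype V] [DecidableEq V]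
    (q : V → V → ℝ) (π : V → ℝ) : Prop :=
  (∀ x, 0 ≤ π x) ∧ (∑ x, π x = 1) ∧
    ∀ y, ∑ x ∈ Finset.univ.filter (fun x => x ≠ y), π x * q x y
        = π y * ∑ z ∈ Finset.univ.filter (fun z => z ≠ y), q y z

/-- `μ` is a stationary distribution for the noisy voter model with rates `q`. -/
def IsStationaryNVM {V : Type} [Fintype V] [DecidableEq V]
    (q : V → V → ℝ) (μ : (V → Bool) → ℝ) : Prop :=
  (∀ η, 0 ≤ μ η) ∧ (∑ η, μ η = 1) ∧ ∀ ξ, ∑ η, μ η * voterGen q η ξ = 0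

/-- Voting rates of continuous-time random walk with parameter 1 on the `n`-star:
`none` is the center vertex and `some i` (for `i : Fin n`) are the leaves. A leaf jumps to the
center at rate 1, and the center jumps to a uniformly chosen leaf at rate 1. -/
noncomputable def starQ (n : ℕ) : Option (Fin n) → Option (Fin n) → ℝ :=
  fun x y => match x, y with
    | some _, none => 1
    | none, some _ => 1 / (n : ℝ)
    | _, _ => 0


attribute [local instance] Matrix.linftyOpNormedAddCommGroup Matrix.linftyOpNormedRing
  Matrix.linftyOpNormedAlgebra

lemma exp_mulVec_eig {m : Type} [Fintype m] [DecidableEq m]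
    (Q : Matrix m m ℝ) (Φ : m → ℝ) (c : ℝ) (h : Q.mulVec Φ = c • Φ) (t : ℝ) :
    (NormedSpace.exp (t • Q)).mulVec Φ = Real.exp (t * c) • Φ := by
  have hpow : ∀ k : ℕ, ((t • Q) ^ k).mulVec Φ = (t * c) ^ k • Φ := by
    intro k
    induction k with
    | zero => simp [Matrix.mulVec_one, Matrix.one_mulVec]
    | succ k ih =>
      rw [pow_succ, ← Matrix.mulVec_mulVec, Matrix.smul_mulVec, h,
        Matrix.mulVec_smul, Matrix.mulVec_smul, ih, pow_succ]
      ext x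
      simp [smul_smul]
      ring
  let L : Matrix m m ℝ →ₗ[ℝ] (m → ℝ) :=
    { toFun := fun M => M.mulVec Φ
      map_add' := fun M N => Matrix.add_mulVec M N Φ
      map_smul' := fun c M => Matrix.smul_mulVec c M Φ }
  let L' : Matrix m m ℝ →L[ℝ] (m → ℝ) := LinearMap.toContinuousLinearMap L
  have hsum : Summable (fun k : ℕ => (k.factorial⁻¹ : ℝ) • (t • Q) ^ k) :=
    NormedSpace.expSeries_summable' (t • Q)
  have htsum := NormedSpace.exp_eq_tsum (𝕂 := ℝ) (𝔸 := Matrix m m ℝ)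
  have key : (NormedSpace.exp (t • Q)).mulVec Φ = L' (NormedSpace.exp (t • Q)) := rfl
  rw [key, htsum, L'.map_tsum hsum]
  have h2 : ∀ k : ℕ, L' ((k.factorial⁻¹ : ℝ) • (t • Q) ^ k)
      = ((k.factorial⁻¹ : ℝ) * (t * c) ^ k) • Φ := by
    intro k
    have : L' ((k.factorial⁻¹ : ℝ) • (t • Q) ^ k)
        = (k.factorial⁻¹ : ℝ) • (((t • Q) ^ k).mulVec Φ) := by
      simp [L', L, Matrix.smul_mulVec]
    rw [this, hpow, smul_smul]
  rw [tsum_congr h2]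
  have hs2 : Summable (fun k : ℕ => (k.factorial⁻¹ : ℝ) * (t * c) ^ k) :=
    NormedSpace.expSeries_summable' (𝕂 := ℝ) (t * c)
  rw [hs2.tsum_smul_const]
  congr 1
  rw [Real.exp_eq_exp_ℝ, NormedSpace.exp_eq_tsum ℝ]
  simp [smul_eq_mul]

lemma gen_apply {V : Type} [Fintype V] [DecidableEq V]
    (r : (V → Bool) → V → ℝ) (Φ : (V → Bool) → ℝ) (η : V → Bool) :
    ∑ ξ, genOfRate r η ξ * Φ ξ
      = ∑ x, r η x * (Φ (Function.update η x (!η x)) - Φ η) := by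
  unfold genOfRate
  simp only [sub_mul, Finset.sum_sub_distrib, Finset.sum_mul, ite_mul, zero_mul, mul_sub]
  congr 1
  · rw [Finset.sum_comm]
    refine Finset.sum_congr rfl fun x _ => ?_
    rw [Finset.sum_ite_eq' Finset.univ (Function.update η x (!η x)) (fun ξ => r η x * Φ ξ)]
    simp
  · rw [Finset.sum_ite_eq' Finset.univ η (fun ξ => ∑ i, r η i * Φ ξ)]
    simp

lemma rate_leaf (n : ℕ) (η : Option (Fin n) → Bool) (a : Fin n) :
    voterRate (starQ n) η (some a)
      = 1 / 2 + (if η none ≠ η (some a) then (1 : ℝ) else 0) := by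
  unfold voterRate
  congr 1
  rw [Finset.sum_eq_single (none : Option (Fin n))]
  · simp [starQ]
  · intro y hy hne
    rcases y with _ | b
    · exact absurd rfl hne
    · simp [starQ]
  · intro h
    simp at h

lemma sum_diff_single {α : Type} [DecidableEq α] (s : Finset α) (f g : α → ℝ) (a : α)
    (ha : a ∈ s) (h : ∀ x ∈ s, x ≠ a → f x = g x) :
    ∑ x ∈ s, f x - ∑ x ∈ s, g x = f a - g a := by
  rw [← Finset.add_sum_erase s f ha, ← Finset.add_sum_erase s g ha]
  have : ∑ x ∈ s.erase a, f x = ∑ x ∈ s.erase a, g x :=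
    Finset.sum_congr rfl fun x hx => h x (Finset.mem_of_mem_erase hx) (Finset.ne_of_mem_erase hx)
  rw [this]; ring

lemma star_gen_eig (n : ℕ) (A B : Finset (Fin n)) (hAB : Disjoint A B)
    (hABunion : A ∪ B = Finset.univ) (hA : A.card = n / 2) (hB : B.card = n / 2)
    (Φ : (Option (Fin n) → Bool) → ℝ)
    (hΦ : ∀ η, Φ η = (∑ x ∈ A, (if η (some x) then (1 : ℝ) else 0))
        - ∑ x ∈ B, (if η (some x) then (1 : ℝ) else 0))
    (η : Option (Fin n) → Bool) :
    ∑ ξ, voterGen (starQ n) η ξ * Φ ξ = -2 * Φ η := by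
  rw [voterGen, gen_apply, Fintype.sum_option]
  have hnone : Φ (Function.update η none (!η none)) - Φ η = 0 := by
    rw [hΦ, hΦ]
    simp [Function.update_of_ne]
  rw [hnone, mul_zero, zero_add]
  set K : ℝ := 1 / 2 + (if η none then 1 else 0) with hK
  have hupd : ∀ (a : Fin n) (x : Fin n), x ≠ a →
      Function.update η (some a) (!η (some a)) (some x) = η (some x) := by
    intro a x hx
    exact Function.update_of_ne (by simpa using hx) _ η
  have hupda : ∀ a : Fin n,
      Function.update η (some a) (!η (some a)) (some a) = !η (some a) := by
    intro a; simp
  have hDA : ∀ a ∈ A, Φ (Function.update η (some a) (!η (some a))) - Φ η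
      = (if !η (some a) then (1:ℝ) else 0) - (if η (some a) then 1 else 0) := by
    intro a haA
    have haB : a ∉ B := Finset.disjoint_left.mp hAB haA
    rw [hΦ, hΦ]
    have h1 : ∑ x ∈ B, (if Function.update η (some a) (!η (some a)) (some x) then (1:ℝ) else 0)
        = ∑ x ∈ B, (if η (some x) then (1:ℝ) else 0) :=
      Finset.sum_congr rfl fun x hx => by rw [hupd a x (fun h => haB (h ▸ hx))]
    have h2 := sum_diff_single A
      (fun x => if Function.update η (some a) (!η (some a)) (some x) then (1:ℝ) else 0)
      (fun x => if η (some x) then (1:ℝ) else 0) a haA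
      (fun x _ hx => by rw [hupd a x hx])
    simp only [hupda] at h2
    rw [h1] at *
    linarith [h2]
  have hDB : ∀ a ∈ B, Φ (Function.update η (some a) (!η (some a))) - Φ η
      = (if η (some a) then (1:ℝ) else 0) - (if !η (some a) then 1 else 0) := by
    intro a haB
    have haA : a ∉ A := Finset.disjoint_right.mp hAB haB
    rw [hΦ, hΦ]
    have h1 : ∑ x ∈ A, (if Function.update η (some a) (!η (some a)) (some x) then (1:ℝ) else 0)
        = ∑ x ∈ A, (if η (some x) then (1:ℝ) else 0) :=
      Finset.sum_congr rfl fun x hx => by rw [hupd a x (fun h => haA (h ▸ hx))]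
    have h2 := sum_diff_single B
      (fun x => if Function.update η (some a) (!η (some a)) (some x) then (1:ℝ) else 0)
      (fun x => if η (some x) then (1:ℝ) else 0) a haB
      (fun x _ hx => by rw [hupd a x hx])
    simp only [hupda] at h2
    rw [h1] at *
    linarith [h2]
  have hterm : ∀ a : Fin n,
      voterRate (starQ n) η (some a)
          * (Φ (Function.update η (some a) (!η (some a))) - Φ η)
      = if a ∈ A then (-2) * (if η (some a) then (1:ℝ) else 0) + K
        else 2 * (if η (some a) then (1:ℝ) else 0) - K := by
    intro a
    by_cases haA : a ∈ A
    · rw [rate_leaf, hDA a haA, if_pos haA, hK]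
      cases h0 : η none <;> cases h1 : η (some a) <;> simp [h0, h1] <;> norm_num
    · have haB : a ∈ B := by
        have : a ∈ A ∪ B := hABunion ▸ Finset.mem_univ a
        rcases Finset.mem_union.mp this with h | h
        · exact absurd h haA
        · exact h
      rw [rate_leaf, hDB a haB, if_neg haA, hK]
      cases h0 : η none <;> cases h1 : η (some a) <;> simp [h0, h1] <;> norm_num
  rw [Finset.sum_congr rfl (fun a _ => hterm a)]
  have hsplit : (Finset.univ : Finset (Fin n)) = A ∪ B := hABunion.symm
  rw [hsplit, Finset.sum_union hAB]
  have hSA : ∑ a ∈ A, (if a ∈ A then (-2) * (if η (some a) then (1:ℝ) else 0) + K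
        else 2 * (if η (some a) then (1:ℝ) else 0) - K)
      = (-2) * (∑ a ∈ A, if η (some a) then (1:ℝ) else 0) + A.card * K := by
    rw [Finset.sum_congr rfl (fun a ha => if_pos ha), Finset.sum_add_distrib,
      Finset.sum_const, ← Finset.mul_sum, nsmul_eq_mul]
  have hSB : ∑ a ∈ B, (if a ∈ A then (-2) * (if η (some a) then (1:ℝ) else 0) + K
        else 2 * (if η (some a) then (1:ℝ) else 0) - K)
      = 2 * (∑ a ∈ B, if η (some a) then (1:ℝ) else 0) - B.card * K := by
    rw [Finset.sum_congr rfl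
        (fun a ha => if_neg (Finset.disjoint_right.mp hAB ha)),
      Finset.sum_sub_distrib, Finset.sum_const, ← Finset.mul_sum, nsmul_eq_mul]
  rw [hSA, hSB, hΦ η]
  have hcard : (A.card : ℝ) = (B.card : ℝ) := by rw [hA, hB]
  linear_combination K * hcard

/-- **Eigenfunction identity in the proof of Theorem 2(i) of Cox–Peres–Steif.** For the noisy
voter model on the `n`-star with the leaves partitioned into two sets `A`, `B` of size `n/2`,
the function `Φ(η) = ∑_{x∈A} η(x) − ∑_{x∈B} η(x)` satisfies `E_η[Φ(η_t)] = e^{−2t} Φ(η)`. -/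
theorem stmt_11 (n : ℕ) (hn : Even n)
    (A B : Finset (Fin n)) (hAB : Disjoint A B) (hABunion : A ∪ B = Finset.univ)
    (hA : A.card = n / 2) (hB : B.card = n / 2)
    (Φ : (Option (Fin n) → Bool) → ℝ)
    (hΦ : ∀ η, Φ η = (∑ x ∈ A, (if η (some x) then (1 : ℝ) else 0))
        - ∑ x ∈ B, (if η (some x) then (1 : ℝ) else 0)) :
    ∀ t : ℝ, 0 ≤ t → ∀ η : Option (Fin n) → Bool,
      ∑ η' : Option (Fin n) → Bool, voterP (starQ n) t η η' * Φ η'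
        = Real.exp (-2 * t) * Φ η := by
  intro t ht η
  have heig : (voterGen (starQ n)).mulVec Φ = (-2 : ℝ) • Φ := by
    funext ξ
    rw [Matrix.mulVec, dotProduct]
    rw [star_gen_eig n A B hAB hABunion hA hB Φ hΦ ξ]
    simp [smul_eq_mul]
  have h := exp_mulVec_eig (voterGen (starQ n)) Φ (-2) heig t
  have h2 := congrFun h η
  rw [Matrix.mulVec, dotProduct] at h2
  simpa [voterP, mul_comm, smul_eq_mul] using h2
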